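/- Each of the following birational transformations maps solutions of the A5^(2) system to solutions: with the notation (*) = (x,y,z,w,t; α0,α1,α2,α3), s0: (*) ↦ (x, y−α0/(x−1), z, w, t; −α0, α1, α2+α0, α3); s1: (*) ↦ (x, y−α1/x, z, w, t; α0, −α1, α2+α1, α3); s2: (*) ↦ (x+α2(w²−t)/(yw²−ty+1), y, z+2α2yw/(yw²−ty+1), w, t; α0+α2, α1+α2, −α2, α3+2α2); s3: (*) ↦ (x, y, z, w−α3/z, t; α0, α1, α2+α3, −α3); π: (*) ↦ (1−x, −y, √(−1)·z, w/√(−1), −t; α1, α0, α2, α3). Precisely: if (x(t),y(t),z(t),w(t)) is a differentiable solution of the A5^(2) system with parameters (α0,α1,α2,α3) on an open set where t ≠ 0 and the relevant denominators (x−1, x, yw²−ty+1, z respectively) do not vanish, then each transformed tuple solves the A5^(2) system with the transformed parameters (for π, the transformed functions are regarded as functions of the new time −t). These transformations generate the extended affine Weyl group of type A5^(2). -/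

import Mathlib

/- STATEMENT 10: the Bäcklund transformations s0,…,s3,π map solutions of the
A5^(2) system to solutions (with transformed parameters; π also transforms the
time t ↦ −t).  The final clause "these transformations generate the extended
affine Weyl group of type A5^(2)" is a side remark and not part of the
formalized claim. -/

open Complex

noncomputable def HA5 (a0 a1 a2 a3 : ℂ) (t x y z w : ℂ) : ℂ :=
  (-(t*x*(x-1)*y^2) + (x^2 + ((a0+a1)*t - 1)*x - a1*t)*y + (a2+a3)*x - (a0*t - 1)*a1
    - z^2*w^4/4 + (a3/2)*z*w^3 + (1/4)*(2*t*z^2 - a3^2)*w^2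
    - (1/2)*((a0 + a1 + 2*a2 + 2*a3)*t - 1)*z*w - t^2*z^2/4
    - x*z*w) / t^2

noncomputable def pdX (H : ℂ → ℂ → ℂ → ℂ → ℂ → ℂ) (t x y z w : ℂ) : ℂ :=
  deriv (fun s => H t s y z w) x

noncomputable def pdY (H : ℂ → ℂ → ℂ → ℂ → ℂ → ℂ) (t x y z w : ℂ) : ℂ :=
  deriv (fun s => H t x s z w) y

noncomputable def pdZ (H : ℂ → ℂ → ℂ → ℂ → ℂ → ℂ) (t x y z w : ℂ) : ℂ :=
  deriv (fun s => H t x y s w) z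

noncomputable def pdW (H : ℂ → ℂ → ℂ → ℂ → ℂ → ℂ) (t x y z w : ℂ) : ℂ :=
  deriv (fun s => H t x y z s) w

def IsSol (H : ℂ → ℂ → ℂ → ℂ → ℂ → ℂ) (U : Set ℂ) (x y z w : ℂ → ℂ) : Prop :=
  ∀ t ∈ U,
    HasDerivAt x (pdY H t (x t) (y t) (z t) (w t)) t ∧
    HasDerivAt y (-(pdX H t (x t) (y t) (z t) (w t))) t ∧
    HasDerivAt z (pdW H t (x t) (y t) (z t) (w t)) t ∧
    HasDerivAt w (-(pdZ H t (x t) (y t) (z t) (w t))) t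


private lemma hasDerivAt_quartic' (A B C D E T x : ℂ) :
    HasDerivAt (fun s : ℂ => (A*s^4 + B*s^3 + C*s^2 + D*s + E)/T^2)
      ((4*A*x^3 + 3*B*x^2 + 2*C*x + D)/T^2) x := by
  have h : HasDerivAt (fun s : ℂ => A*s^4 + B*s^3 + C*s^2 + D*s + E)
      (4*A*x^3 + 3*B*x^2 + 2*C*x + D) x := by
    have H := (((((hasDerivAt_pow 4 x).const_mul A).add
      ((hasDerivAt_pow 3 x).const_mul B)).add
      ((hasDerivAt_pow 2 x).const_mul C)).add
      ((hasDerivAt_id x).const_mul D)).add_const E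
    refine H.congr_deriv ?_
    push_cast; ring
  exact h.div_const _

private lemma pdX_eq (a0 a1 a2 a3 t x y z w : ℂ) :
    pdX (HA5 a0 a1 a2 a3) t x y z w =
      (2*(-(t*y^2)+y)*x + (t*y^2 + ((a0+a1)*t-1)*y + (a2+a3) - z*w))/t^2 := by
  unfold pdX
  have hfun : (fun s => HA5 a0 a1 a2 a3 t s y z w)
      = fun s : ℂ => ((0:ℂ)*s^4 + 0*s^3 + (-(t*y^2)+y)*s^2
          + (t*y^2 + ((a0+a1)*t-1)*y + (a2+a3) - z*w)*s
          + (-(a1*t*y) - (a0*t-1)*a1 - z^2*w^4/4 + (a3/2)*z*w^3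
             + (1/4)*(2*t*z^2-a3^2)*w^2
             - (1/2)*((a0+a1+2*a2+2*a3)*t-1)*z*w - t^2*z^2/4))/t^2 := by
    funext s; simp only [HA5]; ring
  rw [hfun, (hasDerivAt_quartic' _ _ _ _ _ _ _).deriv]
  try ring

private lemma pdY_eq (a0 a1 a2 a3 t x y z w : ℂ) :
    pdY (HA5 a0 a1 a2 a3) t x y z w =
      (-(2*t*x*(x-1)*y) + (x^2 + ((a0+a1)*t-1)*x - a1*t))/t^2 := by
  unfold pdY
  have hfun : (fun s => HA5 a0 a1 a2 a3 t x s z w)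
      = fun s : ℂ => ((0:ℂ)*s^4 + 0*s^3 + (-(t*x*(x-1)))*s^2
          + (x^2 + ((a0+a1)*t-1)*x - a1*t)*s
          + ((a2+a3)*x - (a0*t-1)*a1 - z^2*w^4/4 + (a3/2)*z*w^3
             + (1/4)*(2*t*z^2-a3^2)*w^2
             - (1/2)*((a0+a1+2*a2+2*a3)*t-1)*z*w - t^2*z^2/4 - x*z*w))/t^2 := by
    funext s; simp only [HA5]; ring
  rw [hfun, (hasDerivAt_quartic' _ _ _ _ _ _ _).deriv]
  try ring

private lemma pdZ_eq (a0 a1 a2 a3 t x y z w : ℂ) :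
    pdZ (HA5 a0 a1 a2 a3) t x y z w =
      (2*(-(w^4/4) + t*w^2/2 - t^2/4)*z
        + ((a3/2)*w^3 - (1/2)*((a0+a1+2*a2+2*a3)*t-1)*w - x*w))/t^2 := by
  unfold pdZ
  have hfun : (fun s => HA5 a0 a1 a2 a3 t x y s w)
      = fun s : ℂ => ((0:ℂ)*s^4 + 0*s^3 + (-(w^4/4) + t*w^2/2 - t^2/4)*s^2
          + ((a3/2)*w^3 - (1/2)*((a0+a1+2*a2+2*a3)*t-1)*w - x*w)*s
          + (-(t*x*(x-1)*y^2) + (x^2 + ((a0+a1)*t-1)*x - a1*t)*y + (a2+a3)*x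
             - (a0*t-1)*a1 - (a3^2/4)*w^2))/t^2 := by
    funext s; simp only [HA5]; ring
  rw [hfun, (hasDerivAt_quartic' _ _ _ _ _ _ _).deriv]
  try ring

private lemma pdW_eq (a0 a1 a2 a3 t x y z w : ℂ) :
    pdW (HA5 a0 a1 a2 a3) t x y z w =
      (4*(-(z^2/4))*w^3 + 3*((a3/2)*z)*w^2 + 2*((1/4)*(2*t*z^2-a3^2))*w
        + (-(1/2)*((a0+a1+2*a2+2*a3)*t-1)*z - x*z))/t^2 := by
  unfold pdW
  have hfun : (fun s => HA5 a0 a1 a2 a3 t x y z s)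
      = fun s : ℂ => ((-(z^2/4))*s^4 + ((a3/2)*z)*s^3 + ((1/4)*(2*t*z^2-a3^2))*s^2
          + (-(1/2)*((a0+a1+2*a2+2*a3)*t-1)*z - x*z)*s
          + (-(t*x*(x-1)*y^2) + (x^2 + ((a0+a1)*t-1)*x - a1*t)*y + (a2+a3)*x
             - (a0*t-1)*a1 - t^2*z^2/4))/t^2 := by
    funext s; simp only [HA5]; ring
  rw [hfun, (hasDerivAt_quartic' _ _ _ _ _ _ _).deriv]
  try ring

set_option maxHeartbeats 3200000 in
theorem backlund_A5 (a0 a1 a2 a3 : ℂ)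
    (hrel : a0 + a1 + 2*a2 + a3 = 1)
    (U : Set ℂ) (hU : IsOpen U) (hU0 : ∀ t ∈ U, t ≠ 0)
    (x y z w : ℂ → ℂ)
    (hsol : IsSol (HA5 a0 a1 a2 a3) U x y z w) :
    -- s0
    ((∀ t ∈ U, x t ≠ 1) →
      IsSol (HA5 (-a0) a1 (a2+a0) a3) U
        x (fun t => y t - a0/(x t - 1)) z w) ∧
    -- s1
    ((∀ t ∈ U, x t ≠ 0) →
      IsSol (HA5 a0 (-a1) (a2+a1) a3) U
        x (fun t => y t - a1/(x t)) z w) ∧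
    -- s2
    ((∀ t ∈ U, y t * (w t)^2 - t * y t + 1 ≠ 0) →
      IsSol (HA5 (a0+a2) (a1+a2) (-a2) (a3+2*a2)) U
        (fun t => x t + a2*((w t)^2 - t)/(y t * (w t)^2 - t * y t + 1)) y
        (fun t => z t + 2*a2*(y t)*(w t)/(y t * (w t)^2 - t * y t + 1)) w) ∧
    -- s3
    ((∀ t ∈ U, z t ≠ 0) →
      IsSol (HA5 a0 a1 (a2+a3) (-a3)) U
        x y z (fun t => w t - a3/(z t))) ∧
    -- π : the transformed functions are functions of the new time T = −t
    IsSol (HA5 a1 a0 a2 a3) ((fun t => -t) '' U)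
      (fun T => 1 - x (-T)) (fun T => -(y (-T)))
      (fun T => I * z (-T)) (fun T => w (-T) / I) := by
  refine ⟨?_, ?_, ?_, ?_, ?_⟩
  · -- s0
    intro hd t ht
    obtain ⟨hx, hy, hz, hw⟩ := hsol t ht
    have ht0 := hU0 t ht
    have hx1 : x t - 1 ≠ 0 := sub_ne_zero.mpr (hd t ht)
    simp only [pdX_eq, pdY_eq, pdZ_eq, pdW_eq] at hx hy hz hw
    have ht' : t * t⁻¹ = 1 := mul_inv_cancel₀ ht0
    have hx1' : (x t - 1) * (x t - 1)⁻¹ = 1 := mul_inv_cancel₀ hx1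
    refine ⟨?_, ?_, ?_, ?_⟩
    · simp only [pdY_eq]; convert hx using 1
      simp only [div_eq_mul_inv, ← inv_pow]
      linear_combination (norm := ring1) ((-2)*a0*t⁻¹*(x t) + (-2)*a0*t⁻¹*(x t)*(x t - 1)⁻¹ + (2)*a0*t⁻¹*(x t)^2*(x t - 1)⁻¹) * ht' + ((2)*a0*t⁻¹*(x t)) * hx1'
    · simp only [pdX_eq]
      refine (hy.sub ((hasDerivAt_const t a0).div (hx.sub_const 1) hx1)).congr_deriv (Eq.symm ?_)
      simp only [div_eq_mul_inv, ← inv_pow]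
      linear_combination (norm := ring1) ((2)*a0*t⁻¹*(y t) + (2)*a0*t⁻¹*(y t)*(x t - 1)⁻¹ + (-4)*a0*t⁻¹*(x t)*(y t)*(x t - 1)⁻¹ + (-2)*a0*t⁻¹*(x t)*(y t)*(x t - 1)⁻¹^2 + (2)*a0*t⁻¹*(x t)^2*(y t)*(x t - 1)⁻¹^2 + (1)*a0*a1*t⁻¹*(x t - 1)⁻¹ + (1)*a0*a1*t⁻¹*(x t - 1)⁻¹^2 + (-1)*a0*a1*t⁻¹*(x t)*(x t - 1)⁻¹^2 + (-1)*a0^2*t⁻¹*(x t - 1)⁻¹ + (-1)*a0^2*t⁻¹*(x t - 1)⁻¹^2 + (1)*a0^2*t⁻¹*(x t)*(x t - 1)⁻¹^2) * ht' + ((-2)*a0*t⁻¹*(y t) + (2)*a0*t⁻¹*(x t)*(y t)*(x t - 1)⁻¹ + (1)*a0*t⁻¹^2 + (-1)*a0*t⁻¹^2*(x t)*(x t - 1)⁻¹ + (-1)*a0*a1*t⁻¹*(x t - 1)⁻¹ + (1)*a0^2*t⁻¹*(x t - 1)⁻¹) * hx1'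
    · simp only [pdW_eq]; convert hz using 1; ring1
    · simp only [pdZ_eq]; convert hw using 1; ring1
  · -- s1
    intro hd t ht
    obtain ⟨hx, hy, hz, hw⟩ := hsol t ht
    have ht0 := hU0 t ht
    have hx0 : x t ≠ 0 := hd t ht
    simp only [pdX_eq, pdY_eq, pdZ_eq, pdW_eq] at hx hy hz hw
    have ht' : t * t⁻¹ = 1 := mul_inv_cancel₀ ht0
    have hx0' : x t * (x t)⁻¹ = 1 := mul_inv_cancel₀ hx0
    refine ⟨?_, ?_, ?_, ?_⟩
    · simp only [pdY_eq]; convert hx using 1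
      simp only [div_eq_mul_inv, ← inv_pow]
      linear_combination (norm := ring1) ((2)*a1*t⁻¹ + (-2)*a1*t⁻¹*(x t) + (-2)*a1*t⁻¹*(x t)*(x t)⁻¹ + (2)*a1*t⁻¹*(x t)^2*(x t)⁻¹) * ht' + ((-2)*a1*t⁻¹ + (2)*a1*t⁻¹*(x t)) * hx0'
    · simp only [pdX_eq]
      refine (hy.sub ((hasDerivAt_const t a1).div hx hx0)).congr_deriv (Eq.symm ?_)
      simp only [div_eq_mul_inv, ← inv_pow]
      linear_combination (norm := ring1) ((2)*a1*t⁻¹*(y t) + (2)*a1*t⁻¹*(y t)*(x t)⁻¹ + (-4)*a1*t⁻¹*(x t)*(y t)*(x t)⁻¹ + (-2)*a1*t⁻¹*(x t)*(y t)*(x t)⁻¹^2 + (2)*a1*t⁻¹*(x t)^2*(y t)*(x t)⁻¹^2 + (-1)*a1^2*t⁻¹*(x t)⁻¹ + (1)*a1^2*t⁻¹*(x t)*(x t)⁻¹^2 + (1)*a0*a1*t⁻¹*(x t)⁻¹ + (-1)*a0*a1*t⁻¹*(x t)*(x t)⁻¹^2) * ht' + ((-2)*a1*t⁻¹*(y t)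 + (-2)*a1*t⁻¹*(y t)*(x t)⁻¹ + (2)*a1*t⁻¹*(x t)*(y t)*(x t)⁻¹ + (1)*a1*t⁻¹^2 + (1)*a1*t⁻¹^2*(x t)⁻¹ + (-1)*a1*t⁻¹^2*(x t)*(x t)⁻¹ + (1)*a1^2*t⁻¹*(x t)⁻¹ + (-1)*a0*a1*t⁻¹*(x t)⁻¹) * hx0'
    · simp only [pdW_eq]; convert hz using 1; ring1
    · simp only [pdZ_eq]; convert hw using 1; ring1
  · -- s2
    intro hd t ht
    obtain ⟨hx, hy, hz, hw⟩ := hsol t ht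
    have ht0 := hU0 t ht
    have hDne : y t * (w t)^2 - t * y t + 1 ≠ 0 := hd t ht
    simp only [pdX_eq, pdY_eq, pdZ_eq, pdW_eq] at hx hy hz hw
    have ht' : t * t⁻¹ = 1 := mul_inv_cancel₀ ht0
    have hD' : (y t * (w t)^2 - t * y t + 1) * (y t * (w t)^2 - t * y t + 1)⁻¹ = 1 :=
      mul_inv_cancel₀ hDne
    have hDd := ((hy.mul (hw.pow 2)).sub ((hasDerivAt_id t).mul hy)).add_const 1
    have hN := ((hw.pow 2).sub (hasDerivAt_id t)).const_mul a2
    simp only [id_eq] at hDd hN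
    refine ⟨?_, ?_, ?_, ?_⟩
    · simp only [pdY_eq]
      refine (hx.add (hN.div hDd hDne)).congr_deriv (Eq.symm ?_)
      simp only [div_eq_mul_inv, ← inv_pow, Pi.mul_apply, Pi.sub_apply, Pi.add_apply, Pi.pow_apply, id_eq]
      push_cast
      linear_combination (norm := ring1) ((-1)*a2*(y t)*(y t * (w t)^2 - t * y t + 1)⁻¹ + (1)*a2*(y t)*(y t * (w t)^2 - t * y t + 1)⁻¹^2 + (1)*a2*(y t)^2*(w t)^2*(y t * (w t)^2 - t * y t + 1)⁻¹^2 + (2)*a2*(x t)*(y t)*(y t * (w t)^2 - t * y t + 1)⁻¹ + (-2)*a2*(x t)*(y t)*(y t * (w t)^2 - t * y t + 1)⁻¹^2 + (-2)*a2*(x t)*(y t)^2*(w t)^2*(y t * (w t)^2 - t * y t + 1)⁻¹^2 + (-1)*a2*t⁻¹ + (1)*a2*t⁻¹*(y t * (w t)^2 - t * y t + 1)⁻¹ + (2)*a2*t⁻¹*(y t)*(w t)^2*(y t * (w t)^2 - t * y t + 1)⁻¹ + (-1)*a2*t⁻¹*(y t)*(w t)^2*(y t * (w t)^2 - t * y t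 + 1)⁻¹^2 + (-1)*a2*t⁻¹*(y t)^2*(w t)^4*(y t * (w t)^2 - t * y t + 1)⁻¹^2 + (2)*a2*t⁻¹*(x t) + (-2)*a2*t⁻¹*(x t)*(y t * (w t)^2 - t * y t + 1)⁻¹ + (-4)*a2*t⁻¹*(x t)*(y t)*(w t)^2*(y t * (w t)^2 - t * y t + 1)⁻¹ + (2)*a2*t⁻¹*(x t)*(y t)*(w t)^2*(y t * (w t)^2 - t * y t + 1)⁻¹^2 + (2)*a2*t⁻¹*(x t)*(y t)^2*(w t)^4*(y t * (w t)^2 - t * y t + 1)⁻¹^2 + (-1)*a2*t*(y t)^2*(y t * (w t)^2 - t * y t + 1)⁻¹^2 + (2)*a2*t*(x t)*(y t)^2*(y t * (w t)^2 - t * y t + 1)⁻¹^2 + (-2)*a2*t*t⁻¹*(y t)*(y t * (w t)^2 - t * y t + 1)⁻¹ + (1)*a2*t*t⁻¹*(y t)*(y t * (w t)^2 - t * y t + 1)⁻¹^2 + (2)*a2*t*t⁻¹*(y t)^2*(w t)^2*(y t * (w t)^2 - t * y t + 1)⁻¹^2 + (4)*a2*t*t⁻¹*(x t)*(y t)*(y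 t * (w t)^2 - t * y t + 1)⁻¹ + (-2)*a2*t*t⁻¹*(x t)*(y t)*(y t * (w t)^2 - t * y t + 1)⁻¹^2 + (-4)*a2*t*t⁻¹*(x t)*(y t)^2*(w t)^2*(y t * (w t)^2 - t * y t + 1)⁻¹^2 + (-1)*a2*t^2*t⁻¹*(y t)^2*(y t * (w t)^2 - t * y t + 1)⁻¹^2 + (2)*a2*t^2*t⁻¹*(x t)*(y t)^2*(y t * (w t)^2 - t * y t + 1)⁻¹^2 + (-1)*a2*a3*(y t * (w t)^2 - t * y t + 1)⁻¹^2 + (-1)*a2*a3*t*t⁻¹*(y t * (w t)^2 - t * y t + 1)⁻¹^2 + (-2)*a2^2*(y t * (w t)^2 - t * y t + 1)⁻¹ + (2)*a2^2*(y t)*(w t)^2*(y t * (w t)^2 - t * y t + 1)⁻¹^2 + (2)*a2^2*t⁻¹*(w t)^2*(y t * (w t)^2 - t * y t + 1)⁻¹ + (-2)*a2^2*t⁻¹*(w t)^2*(y t * (w t)^2 - t * y t + 1)⁻¹^2 + (-2)*a2^2*t⁻¹*(y t)*(w t)^4*(y t * (w t)^2 - t * y t + 1)⁻¹^2 + (-2)*a2^2*t*(y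 t)*(y t * (w t)^2 - t * y t + 1)⁻¹^2 + (-2)*a2^2*t*t⁻¹*(y t * (w t)^2 - t * y t + 1)⁻¹ + (4)*a2^2*t*t⁻¹*(y t)*(w t)^2*(y t * (w t)^2 - t * y t + 1)⁻¹^2 + (-2)*a2^2*t^2*t⁻¹*(y t)*(y t * (w t)^2 - t * y t + 1)⁻¹^2 + (-1)*a1*a2*(y t * (w t)^2 - t * y t + 1)⁻¹ + (1)*a1*a2*(y t)*(w t)^2*(y t * (w t)^2 - t * y t + 1)⁻¹^2 + (1)*a1*a2*t⁻¹*(w t)^2*(y t * (w t)^2 - t * y t + 1)⁻¹ + (-1)*a1*a2*t⁻¹*(w t)^2*(y t * (w t)^2 - t * y t + 1)⁻¹^2 + (-1)*a1*a2*t⁻¹*(y t)*(w t)^4*(y t * (w t)^2 - t * y t + 1)⁻¹^2 + (-1)*a1*a2*t*(y t)*(y t * (w t)^2 - t * y t + 1)⁻¹^2 + (-1)*a1*a2*t*t⁻¹*(y t * (w t)^2 - t * y t + 1)⁻¹ + (2)*a1*a2*t*t⁻¹*(y t)*(w t)^2*(y t * (w t)^2 - t * y t + 1)⁻¹^2 +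 (-1)*a1*a2*t^2*t⁻¹*(y t)*(y t * (w t)^2 - t * y t + 1)⁻¹^2 + (-1)*a0*a2*(y t * (w t)^2 - t * y t + 1)⁻¹ + (1)*a0*a2*(y t)*(w t)^2*(y t * (w t)^2 - t * y t + 1)⁻¹^2 + (1)*a0*a2*t⁻¹*(w t)^2*(y t * (w t)^2 - t * y t + 1)⁻¹ + (-1)*a0*a2*t⁻¹*(w t)^2*(y t * (w t)^2 - t * y t + 1)⁻¹^2 + (-1)*a0*a2*t⁻¹*(y t)*(w t)^4*(y t * (w t)^2 - t * y t + 1)⁻¹^2 + (-1)*a0*a2*t*(y t)*(y t * (w t)^2 - t * y t + 1)⁻¹^2 + (-1)*a0*a2*t*t⁻¹*(y t * (w t)^2 - t * y t + 1)⁻¹ + (2)*a0*a2*t*t⁻¹*(y t)*(w t)^2*(y t * (w t)^2 - t * y t + 1)⁻¹^2 + (-1)*a0*a2*t^2*t⁻¹*(y t)*(y t * (w t)^2 - t * y t + 1)⁻¹^2) * ht' + ((1)*a2*(y t)*(y t * (w t)^2 - t * y t + 1)⁻¹ + (-2)*a2*(x t)*(y t)*(y t * (w t)^2 - t * y t + 1)⁻¹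 + (1)*a2*t⁻¹ + (-1)*a2*t⁻¹*(y t)*(w t)^2*(y t * (w t)^2 - t * y t + 1)⁻¹ + (-2)*a2*t⁻¹*(x t) + (2)*a2*t⁻¹*(x t)*(y t)*(w t)^2*(y t * (w t)^2 - t * y t + 1)⁻¹ + (1)*a2*t⁻¹^2*(w t)^2*(y t * (w t)^2 - t * y t + 1)⁻¹ + (-2)*a2*t⁻¹^2*(x t)*(w t)^2*(y t * (w t)^2 - t * y t + 1)⁻¹ + (2)*a2^2*(y t * (w t)^2 - t * y t + 1)⁻¹ + (-2)*a2^2*t⁻¹*(w t)^2*(y t * (w t)^2 - t * y t + 1)⁻¹ + (1)*a1*a2*(y t * (w t)^2 - t * y t + 1)⁻¹ + (-1)*a1*a2*t⁻¹*(w t)^2*(y t * (w t)^2 - t * y t + 1)⁻¹ + (1)*a0*a2*(y t * (w t)^2 - t * y t + 1)⁻¹ + (-1)*a0*a2*t⁻¹*(w t)^2*(y t * (w t)^2 - t * y t + 1)⁻¹) * hD' + ((-1)*a2*(y t * (w t)^2 - t * y t + 1)⁻¹^2) * hrel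
    · simp only [pdX_eq]; convert hy using 1
      simp only [div_eq_mul_inv, ← inv_pow]
      linear_combination (norm := ring1) ((-2)*a2*t⁻¹*(y t) + (2)*a2*t⁻¹*(y t)*(y t * (w t)^2 - t * y t + 1)⁻¹ + (2)*a2*t⁻¹*(y t)^2*(w t)^2*(y t * (w t)^2 - t * y t + 1)⁻¹ + (-2)*a2*t*t⁻¹*(y t)^2*(y t * (w t)^2 - t * y t + 1)⁻¹) * ht' + ((2)*a2*t⁻¹*(y t)) * hD'
    · simp only [pdW_eq]
      refine (hz.add (((hy.const_mul (2*a2)).mul hw).div hDd hDne)).congr_deriv (Eq.symm ?_)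
      simp only [div_eq_mul_inv, ← inv_pow, Pi.mul_apply, Pi.sub_apply, Pi.add_apply, Pi.pow_apply, id_eq]
      push_cast
      linear_combination (norm := ring1) ((1)*a2*(y t)*(z t)*(y t * (w t)^2 - t * y t + 1)⁻¹ + (-1)*a2*(y t)*(z t)*(y t * (w t)^2 - t * y t + 1)⁻¹^2 + (-1)*a2*(y t)^2*(z t)*(w t)^2*(y t * (w t)^2 - t * y t + 1)⁻¹^2 + (-1)*a2*t⁻¹*(z t) + (1)*a2*t⁻¹*(z t)*(y t * (w t)^2 - t * y t + 1)⁻¹ + (1)*a2*t⁻¹*(y t)*(z t)*(w t)^2*(y t * (w t)^2 - t * y t + 1)⁻¹ + (1)*a2*t*(y t)^2*(z t)*(y t * (w t)^2 - t * y t + 1)⁻¹^2 + (-1)*a2*t*t⁻¹*(y t)*(z t)*(y t * (w t)^2 - t * y t + 1)⁻¹^2 + (-1)*a2*t*t⁻¹*(y t)^2*(z t)*(w t)^2*(y t * (w t)^2 - t * y t + 1)⁻¹^2 + (1)*a2*t^2*t⁻¹*(y t)^2*(z t)*(y t * (w t)^2 - t * y t + 1)⁻¹^2 + (2)*a2*a3*(y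 t)^2*(w t)*(y t * (w t)^2 - t * y t + 1)⁻¹^2 + (2)*a2*a3*t*t⁻¹*(y t)^2*(w t)*(y t * (w t)^2 - t * y t + 1)⁻¹^2 + (4)*a2^2*(y t)^2*(w t)*(y t * (w t)^2 - t * y t + 1)⁻¹^2 + (-2)*a2^2*t⁻¹*(y t)*(w t)*(y t * (w t)^2 - t * y t + 1)⁻¹ + (2)*a2^2*t⁻¹*(y t)*(w t)*(y t * (w t)^2 - t * y t + 1)⁻¹^2 + (2)*a2^2*t⁻¹*(y t)^2*(w t)^3*(y t * (w t)^2 - t * y t + 1)⁻¹^2 + (2)*a2^2*t*t⁻¹*(y t)^2*(w t)*(y t * (w t)^2 - t * y t + 1)⁻¹^2 + (2)*a1*a2*(y t)^2*(w t)*(y t * (w t)^2 - t * y t + 1)⁻¹^2 + (-1)*a1*a2*t⁻¹*(y t)*(w t)*(y t * (w t)^2 - t * y t + 1)⁻¹ + (1)*a1*a2*t⁻¹*(y t)*(w t)*(y t * (w t)^2 - t * y t + 1)⁻¹^2 + (1)*a1*a2*t⁻¹*(y t)^2*(w t)^3*(y t * (w t)^2 - t * y t + 1)⁻¹^2 + (1)*a1*a2*t*t⁻¹*(y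 t)^2*(w t)*(y t * (w t)^2 - t * y t + 1)⁻¹^2 + (2)*a0*a2*(y t)^2*(w t)*(y t * (w t)^2 - t * y t + 1)⁻¹^2 + (-1)*a0*a2*t⁻¹*(y t)*(w t)*(y t * (w t)^2 - t * y t + 1)⁻¹ + (1)*a0*a2*t⁻¹*(y t)*(w t)*(y t * (w t)^2 - t * y t + 1)⁻¹^2 + (1)*a0*a2*t⁻¹*(y t)^2*(w t)^3*(y t * (w t)^2 - t * y t + 1)⁻¹^2 + (1)*a0*a2*t*t⁻¹*(y t)^2*(w t)*(y t * (w t)^2 - t * y t + 1)⁻¹^2) * ht' + ((-1)*a2*(y t)*(z t)*(y t * (w t)^2 - t * y t + 1)⁻¹ + (1)*a2*t⁻¹*(z t) + (-3)*a2*t⁻¹^2*(z t)*(w t)^2 + (-2)*a2*t⁻¹^2*(z t)*(w t)^2*(y t * (w t)^2 - t * y t + 1)⁻¹ + (-1)*a2*t⁻¹^2*(y t)*(w t)*(y t * (w t)^2 - t * y t + 1)⁻¹ + (1)*a2*t⁻¹^2*(y t)*(z t)*(w t)^4*(y t * (w t)^2 - t * y t + 1)⁻¹ + (2)*a2*t⁻¹^2*(x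 t)*(y t)*(w t)*(y t * (w t)^2 - t * y t + 1)⁻¹ + (2)*a2*a3*t⁻¹^2*(w t) + (2)*a2*a3*t⁻¹^2*(w t)*(y t * (w t)^2 - t * y t + 1)⁻¹ + (-1)*a2*a3*t⁻¹^2*(y t)*(w t)^3*(y t * (w t)^2 - t * y t + 1)⁻¹ + (2)*a2^2*t⁻¹*(y t)*(w t)*(y t * (w t)^2 - t * y t + 1)⁻¹ + (2)*a2^2*t⁻¹^2*(w t) + (2)*a2^2*t⁻¹^2*(w t)*(y t * (w t)^2 - t * y t + 1)⁻¹ + (-4)*a2^2*t⁻¹^2*(y t)*(w t)^3*(y t * (w t)^2 - t * y t + 1)⁻¹ + (1)*a1*a2*t⁻¹*(y t)*(w t)*(y t * (w t)^2 - t * y t + 1)⁻¹ + (1)*a0*a2*t⁻¹*(y t)*(w t)*(y t * (w t)^2 - t * y t + 1)⁻¹) * hD' + ((2)*a2*(y t)^2*(w t)*(y t * (w t)^2 - t * y t + 1)⁻¹^2) * hrel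
    · simp only [pdZ_eq]; convert hw using 1
      simp only [div_eq_mul_inv, ← inv_pow]
      linear_combination (norm := ring1) ((1)*a2*t⁻¹*(w t) + (-1)*a2*t⁻¹*(w t)*(y t * (w t)^2 - t * y t + 1)⁻¹ + (-1)*a2*t⁻¹*(y t)*(w t)^3*(y t * (w t)^2 - t * y t + 1)⁻¹ + (1)*a2*t*t⁻¹*(y t)*(w t)*(y t * (w t)^2 - t * y t + 1)⁻¹) * ht' + ((-1)*a2*t⁻¹*(w t) + (1)*a2*t⁻¹^2*(w t)^3) * hD'
  · -- s3
    intro hd t ht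
    obtain ⟨hx, hy, hz, hw⟩ := hsol t ht
    have ht0 := hU0 t ht
    have hz0 : z t ≠ 0 := hd t ht
    simp only [pdX_eq, pdY_eq, pdZ_eq, pdW_eq] at hx hy hz hw
    have ht' : t * t⁻¹ = 1 := mul_inv_cancel₀ ht0
    have hz' : z t * (z t)⁻¹ = 1 := mul_inv_cancel₀ hz0
    refine ⟨?_, ?_, ?_, ?_⟩
    · simp only [pdY_eq]; convert hx using 1 <;> ring1
    · simp only [pdX_eq]; convert hy using 1
      simp only [div_eq_mul_inv, ← inv_pow]
      linear_combination (norm := ring1) ((-1)*a3*t⁻¹^2) * hz'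
    · simp only [pdW_eq]; convert hz using 1
      simp only [div_eq_mul_inv, ← inv_pow]
      linear_combination (norm := ring1) ((1)*a3*t⁻¹*(z t) + (-1)*a3*t⁻¹*(z t)^2*(z t)⁻¹) * ht' + ((-1)*a3*t⁻¹*(z t) + (3)*a3*t⁻¹^2*(z t)*(w t)^2 + (-3)*a3^2*t⁻¹^2*(z t)*(w t)*(z t)⁻¹ + (-1/2)*a3^3*t⁻¹^2*(z t)⁻¹ + (1)*a3^3*t⁻¹^2*(z t)*(z t)⁻¹^2) * hz'
    · simp only [pdZ_eq]
      refine (hw.sub ((hasDerivAt_const t a3).div hz hz0)).congr_deriv (Eq.symm ?_)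
      simp only [div_eq_mul_inv, ← inv_pow]
      linear_combination (norm := ring1) ((-1)*a3*t⁻¹*(w t) + (2)*a3*t⁻¹*(z t)*(w t)*(z t)⁻¹ + (-1)*a3*t⁻¹*(z t)^2*(w t)*(z t)⁻¹^2 + (-1)*a2*a3*t⁻¹*(z t)⁻¹ + (1)*a2*a3*t⁻¹*(z t)*(z t)⁻¹^2 + (-1/2)*a1*a3*t⁻¹*(z t)⁻¹ + (1/2)*a1*a3*t⁻¹*(z t)*(z t)⁻¹^2 + (-1/2)*a0*a3*t⁻¹*(z t)⁻¹ + (1/2)*a0*a3*t⁻¹*(z t)*(z t)⁻¹^2) * ht' + ((1)*a3*t⁻¹*(w t) + (-1)*a3*t⁻¹*(z t)*(w t)*(z t)⁻¹ + (-1/2)*a3*t⁻¹^2*(z t)⁻¹ + (-1)*a3*t⁻¹^2*(w t)^3 + (1)*a3*t⁻¹^2*(z t)*(w t)^3*(z t)⁻¹ + (1)*a3*t⁻¹^2*(x t)*(z t)⁻¹ + (3/2)*a3^2*t⁻¹^2*(w t)^2*(z t)⁻¹ + (-2)*a3^3*t⁻¹^2*(w t)*(z t)⁻¹^2 + (1/2)*a3^4*t⁻¹^2*(z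 t)⁻¹^3 + (1)*a2*a3*t⁻¹*(z t)⁻¹ + (1/2)*a1*a3*t⁻¹*(z t)⁻¹ + (1/2)*a0*a3*t⁻¹*(z t)⁻¹) * hz'
  · -- pi
    rintro T ⟨t, ht, rfl⟩
    obtain ⟨hx, hy, hz, hw⟩ := hsol t ht
    have ht0 := hU0 t ht
    simp only [pdX_eq, pdY_eq, pdZ_eq, pdW_eq] at hx hy hz hw
    have ht' : t * t⁻¹ = 1 := mul_inv_cancel₀ ht0
    have hi2 : Complex.I^2 = -1 := Complex.I_sq
    have hi3 : Complex.I⁻¹ = -Complex.I := Complex.inv_I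
    have hneg : HasDerivAt (fun s : ℂ => -s) (-1) (-t) := (hasDerivAt_id (-t)).neg
    rw [show t = -(-t) from (neg_neg t).symm] at hx hy hz hw
    have hcx := (hx.comp (-t) hneg).const_sub 1
    have hcy := (hy.comp (-t) hneg).neg
    have hcz := (hz.comp (-t) hneg).const_mul Complex.I
    have hcw := (hw.comp (-t) hneg).div_const Complex.I
    simp only [Function.comp_def] at hcx hcy hcz hcw
    refine ⟨?_, ?_, ?_, ?_⟩
    · simp only [neg_neg, pdY_eq]; refine (hcx).congr_deriv (Eq.symm ?_) <;> (simp only [div_eq_mul_inv, ← inv_pow, neg_neg]; ring1)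
    · simp only [neg_neg, pdX_eq]; refine (hcy).congr_deriv (Eq.symm ?_)
      simp only [div_eq_mul_inv, ← inv_pow, neg_neg]
      linear_combination (norm := ring1) ((1)*t⁻¹^2*(z t)*(w t)*Complex.I) * hi3 + ((-1)*t⁻¹^2*(z t)*(w t)) * hi2
    · simp only [neg_neg, pdW_eq]; refine (hcz).congr_deriv (Eq.symm ?_)
      simp only [div_eq_mul_inv, ← inv_pow, neg_neg]
      linear_combination (norm := ring1) ((1)*t⁻¹*(z t)^2*(w t)*Complex.I + (-1)*t⁻¹*(z t)^2*(w t)*Complex.I^2*Complex.I⁻¹) * ht' + ((-1)*t⁻¹*(z t)^2*(w t)*Complex.I^2 + (-1)*t⁻¹^2*(z t)^2*(w t)^3*Complex.I^2*Complex.I⁻¹^2 + (1)*t⁻¹^2*(z t)^2*(w t)^3*Complex.I^3*Complex.I⁻¹ + (-1)*t⁻¹^2*(z t)^2*(w t)^3*Complex.I^4 + (3/2)*a3*t⁻¹^2*(z t)*(w t)^2*Complex.I*Complex.I⁻¹ + (-3/2)*a3*t⁻¹^2*(z t)*(w t)^2*Complex.I^2 + (-1/2)*a3^2*t⁻¹^2*(w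 t)) * hi3 + ((1)*t⁻¹*(z t)^2*(w t)*Complex.I + (-1)*t⁻¹^2*(z t)^2*(w t)^3*Complex.I + (1)*t⁻¹^2*(z t)^2*(w t)^3*Complex.I^3 + (3/2)*a3*t⁻¹^2*(z t)*(w t)^2*Complex.I) * hi2
    · simp only [neg_neg, pdZ_eq]; refine (hcw).congr_deriv (Eq.symm ?_)
      simp only [div_eq_mul_inv, ← inv_pow, neg_neg]
      linear_combination (norm := ring1) ((1/2)*(z t)*Complex.I⁻¹ + (1/2)*(z t)*Complex.I + (-1)*t⁻¹*(z t)*(w t)^2*Complex.I⁻¹ + (1)*t⁻¹*(z t)*(w t)^2*Complex.I*Complex.I⁻¹^2 + (1/2)*t*t⁻¹*(z t)*Complex.I⁻¹ + (1/2)*t*t⁻¹*(z t)*Complex.I) * ht' + ((1/2)*(z t) + (-1)*t⁻¹*(z t)*(w t)^2 + (1)*t⁻¹*(z t)*(w t)^2*Complex.I*Complex.I⁻¹ + (-1)*t⁻¹*(z t)*(w t)^2*Complex.I^2 + (1/2)*t⁻¹^2*(z t)*(w t)^4 + (1/2)*t⁻¹^2*(z t)*(w t)^4*Complex.I*Complex.I⁻¹^3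 + (-1/2)*t⁻¹^2*(z t)*(w t)^4*Complex.I^2*Complex.I⁻¹^2 + (1/2)*t⁻¹^2*(z t)*(w t)^4*Complex.I^3*Complex.I⁻¹ + (-1/2)*t⁻¹^2*(z t)*(w t)^4*Complex.I^4 + (-1/2)*a3*t⁻¹^2*(w t)^3 + (-1/2)*a3*t⁻¹^2*(w t)^3*Complex.I⁻¹^2 + (1/2)*a3*t⁻¹^2*(w t)^3*Complex.I*Complex.I⁻¹ + (-1/2)*a3*t⁻¹^2*(w t)^3*Complex.I^2) * hi3 + ((1)*t⁻¹*(z t)*(w t)^2*Complex.I + (-1/2)*t⁻¹^2*(z t)*(w t)^4*Complex.I + (1/2)*t⁻¹^2*(z t)*(w t)^4*Complex.I^3 + (1/2)*a3*t⁻¹^2*(w t)^3*Complex.I) * hi2
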